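/- Suppose S ⊆ L is nonempty, Z ⊆ C satisfies |Z| ≤ m, and cost(S, C \ Z) ≤ OPT. For each x ∈ Z let g(x) ∈ L be a facility minimizing d(x, ·) over L, and let G = { g(x) : x ∈ Z }. Then for every subset C' ⊆ C with |C'| ≥ |C| − m, every partition O = (O_1, …, O_k) of C' into k (possibly empty) parts, and every client x ∈ C', the closest point of S ∪ G to x satisfies min_{h ∈ S ∪ G} d(x, h)^z ≤ Ψ*(O). -/

import Mathlib

open Finset

noncomputable section

/-- Minimum of `f` over a finite set (`sInf` of the image; `0` on the empty set). -/
def minOver {X : Type*} (s : Finset X) (f : X → ℝ) : ℝ := sInf (f '' ↑s)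

/-- Maximum of `f` over a finite set (`sSup` of the image; `0` on the empty set). -/
def maxOver {X : Type*} (s : Finset X) (f : X → ℝ) : ℝ := sSup (f '' ↑s)

/-- `cost(F, C') = max_{x ∈ C'} min_{f ∈ F} d(f, x)^z`. -/
def ksCost {X : Type*} [MetricSpace X] (z : ℝ) (F C' : Finset X) : ℝ :=
  maxOver C' fun x => minOver F fun f => dist f x ^ z

/-- `Ψ(F, O) = max_{1 ≤ i ≤ k} min_{f ∈ F} max_{x ∈ O_i} d(x, f)^z`. -/
def Psi {X : Type*} [MetricSpace X] (z : ℝ) {k : ℕ} (F : Finset X)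
    (O : Fin k → Finset X) : ℝ :=
  ⨆ i : Fin k, minOver F fun f => maxOver (O i) fun x => dist x f ^ z

/-- `Ψ*(O) = min_{F ⊆ L, |F| = k} Ψ(F, O)`. -/
def PsiStar {X : Type*} [MetricSpace X] (z : ℝ) (L : Finset X) {k : ℕ}
    (O : Fin k → Finset X) : ℝ :=
  sInf ((fun F => Psi z F O) '' {F : Finset X | F ⊆ L ∧ F.card = k})

/-- `OPT = min_{F ⊆ L, |F| = k, Z ⊆ C, |Z| ≤ m} cost(F, C \ Z)`. -/
def OPTCost {X : Type*} [MetricSpace X] [DecidableEq X] (z : ℝ) (k m : ℕ)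
    (L C : Finset X) : ℝ :=
  sInf ((fun p : Finset X × Finset X => ksCost z p.1 (C \ p.2)) ''
    {p : Finset X × Finset X | p.1 ⊆ L ∧ p.1.card = k ∧ p.2 ⊆ C ∧ p.2.card ≤ m})

lemma minOver_le {X : Type*} {s : Finset X} {f : X → ℝ} {a : X} (ha : a ∈ s) :
    minOver s f ≤ f a :=
  csInf_le ((s.finite_toSet.image f).bddBelow) ⟨a, ha, rfl⟩

lemma le_minOver {X : Type*} {s : Finset X} (hs : s.Nonempty) {f : X → ℝ} {b : ℝ}
    (h : ∀ a ∈ s, b ≤ f a) : b ≤ minOver s f :=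
  le_csInf ((hs.to_set.image f)) (by rintro _ ⟨a, ha, rfl⟩; exact h a ha)

lemma le_maxOver {X : Type*} {s : Finset X} {f : X → ℝ} {a : X} (ha : a ∈ s) :
    f a ≤ maxOver s f :=
  le_csSup ((s.finite_toSet.image f).bddAbove) ⟨a, ha, rfl⟩

lemma maxOver_le {X : Type*} {s : Finset X} (hs : s.Nonempty) {f : X → ℝ} {b : ℝ}
    (h : ∀ a ∈ s, f a ≤ b) : maxOver s f ≤ b :=
  csSup_le (hs.to_set.image f) (by rintro _ ⟨a, ha, rfl⟩; exact h a ha)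

lemma minOver_subset {X : Type*} {s t : Finset X} (hst : s ⊆ t) (hs : s.Nonempty)
    (f : X → ℝ) : minOver t f ≤ minOver s f :=
  csInf_le_csInf ((t.finite_toSet.image f).bddBelow) (hs.to_set.image f)
    (Set.image_mono (by exact_mod_cast hst))

theorem closest_in_S_union_G_le_psiStar {X : Type*} [MetricSpace X] [DecidableEq X]
    (k m : ℕ) (hk : 1 ≤ k) (z : ℝ) (hz : 0 < z)
    (C L : Finset X) (hC : C.Nonempty) (hL : k ≤ L.card)
    (S : Finset X) (hSL : S ⊆ L) (hS : S.Nonempty)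
    (Z : Finset X) (hZC : Z ⊆ C) (hZm : Z.card ≤ m)
    (hcost : ksCost z S (C \ Z) ≤ OPTCost z k m L C)
    (g : X → X) (hgL : ∀ x ∈ Z, g x ∈ L)
    (hgmin : ∀ x ∈ Z, ∀ f ∈ L, dist x (g x) ≤ dist x f)
    (C' : Finset X) (hC'sub : C' ⊆ C) (hC'card : C.card - m ≤ C'.card)
    (O : Fin k → Finset X)
    (hdisj : ∀ i j, i ≠ j → Disjoint (O i) (O j))
    (hcover : Finset.univ.biUnion O = C') :
    ∀ x ∈ C', minOver (S ∪ Z.image g) (fun h => dist x h ^ z) ≤ PsiStar z L O := by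
  intro x hx
  apply le_csInf
  · obtain ⟨F, hFL, hFc⟩ := Finset.exists_subset_card_eq hL
    exact ⟨_, ⟨F, ⟨hFL, hFc⟩, rfl⟩⟩
  rintro b ⟨F, ⟨hFL, hFk⟩, rfl⟩
  have hFne : F.Nonempty := Finset.card_pos.mp (by omega)
  have hbddA : BddAbove (Set.range fun i : Fin k =>
      minOver F fun f => maxOver (O i) fun y => dist y f ^ z) :=
    (Set.finite_range _).bddAbove
  have hkne : Nonempty (Fin k) := ⟨⟨0, by omega⟩⟩
  -- for any client y in some O j, min_{f∈F} dist(y,f)^z ≤ Psi z F O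
  have key : ∀ (j : Fin k), ∀ y ∈ O j,
      (minOver F fun f => dist y f ^ z) ≤ Psi z F O := by
    intro j y hy
    have h1 : (minOver F fun f => dist y f ^ z) ≤
        minOver F fun f => maxOver (O j) fun w => dist w f ^ z := by
      apply le_minOver hFne
      intro f hf
      exact le_trans (minOver_le hf) (le_maxOver (f := fun w => dist w f ^ z) hy)
    exact le_trans h1 (le_ciSup hbddA j)
  obtain ⟨i, _, hxOi⟩ : ∃ i ∈ Finset.univ, x ∈ O i :=
    Finset.mem_biUnion.mp (by rw [hcover]; exact hx)
  by_cases hxZ : x ∈ Z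
  · -- x ∈ Z : use g x
    have hmem : g x ∈ S ∪ Z.image g :=
      Finset.mem_union_right _ (Finset.mem_image_of_mem g hxZ)
    have h1 : minOver (S ∪ Z.image g) (fun h => dist x h ^ z) ≤ dist x (g x) ^ z :=
      minOver_le hmem
    refine le_trans h1 (le_trans ?_ (key i x hxOi))
    apply le_minOver hFne
    intro f hf
    exact Real.rpow_le_rpow dist_nonneg (hgmin x hxZ f (hFL hf)) hz.le
  · -- x ∉ Z : go through OPT
    have h1 : minOver (S ∪ Z.image g) (fun h => dist x h ^ z) ≤
        minOver S (fun h => dist x h ^ z) :=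
      minOver_subset Finset.subset_union_left hS _
    have h2 : minOver S (fun h => dist x h ^ z) ≤ ksCost z S (C \ Z) := by
      have hxCZ : x ∈ C \ Z := Finset.mem_sdiff.mpr ⟨hC'sub hx, hxZ⟩
      have := le_maxOver (f := fun y => minOver S fun f => dist f y ^ z) hxCZ
      simp only [ksCost, dist_comm] at this ⊢
      exact this
    -- OPT ≤ ksCost z F (C \ (C \ C')) = ksCost z F C' ≤ Psi z F O
    have hZ'card : (C \ C').card ≤ m := by
      have h := Finset.card_sdiff_of_subset hC'sub
      have h2 := Finset.card_le_card hC'sub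
      omega
    have hOPT : OPTCost z k m L C ≤ ksCost z F (C \ (C \ C')) := by
      apply csInf_le
      · apply Set.Finite.bddBelow
        apply Set.Finite.image
        apply Set.Finite.subset (Finset.finite_toSet (L.powerset ×ˢ C.powerset))
        intro p hp
        simp only [Finset.coe_product, Set.mem_prod, Finset.mem_coe,
          Finset.mem_powerset]
        exact ⟨hp.1, hp.2.2.1⟩
      · exact ⟨(F, C \ C'), ⟨hFL, hFk, Finset.sdiff_subset, hZ'card⟩, rfl⟩
    have hCC' : C \ (C \ C') = C' := by
      rw [Finset.sdiff_sdiff_self_left, Finset.inter_eq_right.mpr hC'sub]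
    rw [hCC'] at hOPT
    have h3 : ksCost z F C' ≤ Psi z F O := by
      apply maxOver_le ⟨x, hx⟩
      intro y hy
      obtain ⟨j, _, hyOj⟩ : ∃ j ∈ Finset.univ, y ∈ O j :=
        Finset.mem_biUnion.mp (by rw [hcover]; exact hy)
      have := key j y hyOj
      simp only [dist_comm] at this ⊢
      exact this
    exact le_trans h1 (le_trans h2 (le_trans hcost (le_trans hOPT h3)))


end
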